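/- arXiv:1302.5736 — 5 statements merged into one kernel-verified Lean document; each statement's English description precedes it below -/
import Mathlib

section
/- Let M_{abel,m} be the commutative monoid generated by a, b subject to a^m = b^m (m ≥ 2), realized as ℕ² / ∼ where (p,q) ∼ (p',q') iff they are connected by moves replacing m copies of a with m copies of b or vice versa. Then M_{abel,m} is cancellative. -/
/-- The congruence on `ℕ²` generated by `(m,0) ∼ (0,m)`. -/
def abelRel (m : ℕ) : ℕ × ℕ → ℕ × ℕ → Prop :=
  fun p q => p = (m, 0) ∧ q = (0, m)

/-- `M_{abel,m} = ⟨a,b | aᵐ = bᵐ, ab = ba⟩` as a quotient of `ℕ²`. -/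
def MAbel (m : ℕ) := (addConGen (abelRel m)).Quotient

instance (m : ℕ) : AddCommMonoid (MAbel m) :=
  inferInstanceAs (AddCommMonoid (addConGen (abelRel m)).Quotient)

/-- The invariant congruence: equal total degree and first coordinates congruent mod m. -/
def abelCon (m : ℕ) : AddCon (ℕ × ℕ) where
  r x y := x.1 + x.2 = y.1 + y.2 ∧ x.1 ≡ y.1 [MOD m]
  iseqv := by
    constructor
    · exact fun x => ⟨rfl, Nat.ModEq.refl _⟩
    · exact fun h => ⟨h.1.symm, h.2.symm⟩
    · exact fun h h' => ⟨h.1.trans h'.1, h.2.trans h'.2⟩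
  add' := by
    rintro a b c d ⟨h1, h2⟩ ⟨h3, h4⟩
    exact ⟨by simp only [Prod.fst_add, Prod.snd_add]; omega, h2.add h4⟩

lemma step (m : ℕ) (a b : ℕ) :
    addConGen (abelRel m) (a + m, b) (a, b + m) := by
  have h := (AddConGen.Rel.of _ _ ⟨rfl, rfl⟩ : AddConGen.Rel (abelRel m) (m, 0) (0, m))
  have := h.add (AddConGen.Rel.refl ((a, b) : ℕ × ℕ))
  have h2 : ((m, 0) + (a, b) : ℕ × ℕ) = (a + m, b) := by
    simp [Prod.ext_iff, Nat.add_comm]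
  have h3 : ((0, m) + (a, b) : ℕ × ℕ) = (a, b + m) := by
    simp [Prod.ext_iff, Nat.add_comm]
  rw [h2, h3] at this
  exact this

lemma shift (m : ℕ) (k a b : ℕ) :
    addConGen (abelRel m) (a + k * m, b) (a, b + k * m) := by
  induction k generalizing b with
  | zero => simpa using (addConGen (abelRel m)).refl (a, b)
  | succ k ih =>
    have h1 : addConGen (abelRel m) (a + (k+1) * m, b) (a + k * m, b + m) := by
      have := step m (a + k * m) b
      convert this using 2
      ring
    refine h1.trans ?_
    have h2 := ih (b + m)
    have : b + m + k * m = b + (k+1) * m := by ring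
    rwa [this] at h2

lemma con_le (m : ℕ) (hm : 0 < m) (x y : ℕ × ℕ)
    (h : abelCon m x y) : addConGen (abelRel m) x y := by
  obtain ⟨hsum, hmod⟩ := h
  rcases le_total y.1 x.1 with hle | hle
  · obtain ⟨k, hk⟩ := (Nat.modEq_iff_dvd' hle).mp hmod.symm
    rw [Nat.mul_comm] at hk
    have hx1 : x.1 = y.1 + k * m := by omega
    have hy2 : y.2 = x.2 + k * m := by omega
    have := shift m k y.1 x.2
    rw [← hx1, ← hy2] at this
    have hx : x = (x.1, x.2) := rfl
    have hy : y = (y.1, y.2) := rfl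
    rw [hx, hy]
    exact this
  · obtain ⟨k, hk⟩ := (Nat.modEq_iff_dvd' hle).mp hmod
    rw [Nat.mul_comm] at hk
    have hy1 : y.1 = x.1 + k * m := by omega
    have hx2 : x.2 = y.2 + k * m := by omega
    have := shift m k x.1 y.2
    rw [← hy1, ← hx2] at this
    have hx : x = (x.1, x.2) := rfl
    have hy : y = (y.1, y.2) := rfl
    rw [hx, hy]
    exact this.symm

lemma le_con (m : ℕ) : addConGen (abelRel m) ≤ abelCon m := by
  apply AddCon.addConGen_le.mpr
  rintro x y ⟨rfl, rfl⟩
  exact ⟨by simp, by simpa using (Nat.modEq_zero_iff_dvd.mpr dvd_rfl)⟩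

/-- The monoid `M_{abel,m}` is cancellative. -/
theorem stmt_5 (m : ℕ) (hm : 2 ≤ m) :
    ∀ x y z : MAbel m, x + z = y + z → x = y := by
  intro x y z
  induction x using AddCon.induction_on with | H x =>
  induction y using AddCon.induction_on with | H y =>
  induction z using AddCon.induction_on with | H z =>
  intro h
  have h' : (addConGen (abelRel m)) (x + z) (y + z) := by
    rwa [← AddCon.eq, AddCon.coe_add, AddCon.coe_add]
  have hc := le_con m h'
  obtain ⟨hsum, hmod⟩ := hc
  simp only [Prod.fst_add, Prod.snd_add] at hsum hmod
  have hc' : abelCon m x y := by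
    constructor
    · omega
    · exact (Nat.ModEq.add_right_cancel' z.1 hmod)
  exact (AddCon.eq _).mpr (con_le m (by omega) x y hc')
end

section
/- In the monoid M_{abel,m} = ⟨a,b | a^m = b^m, ab=ba⟩_mo with m ≥ 2, if a·X = b·Y for elements X, Y, then either X = a^{m-1}·Z and Y = b^{m-1}·Z for some Z, or X = b·Z and Y = a·Z for some Z. -/
/-- The generator `a` of `M_{abel,m}`. -/
def MAbel.a (m : ℕ) : MAbel m := (addConGen (abelRel m)).mk' (1, 0)

/-- The generator `b` of `M_{abel,m}`. -/
def MAbel.b (m : ℕ) : MAbel m := (addConGen (abelRel m)).mk' (0, 1)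

def myCon (m : ℕ) : AddCon (ℕ × ℕ) where
  r p q := p.1 + p.2 = q.1 + q.2 ∧ p.1 % m = q.1 % m
  iseqv := ⟨fun _ => ⟨rfl, rfl⟩, fun ⟨h1, h2⟩ => ⟨h1.symm, h2.symm⟩,
    fun ⟨h1, h2⟩ ⟨h3, h4⟩ => ⟨h1.trans h3, h2.trans h4⟩⟩
  add' := by
    rintro a b c d ⟨h1, h2⟩ ⟨h3, h4⟩
    refine ⟨by dsimp; omega, ?_⟩
    exact Nat.ModEq.add h2 h4

lemma key (m : ℕ) : ∀ (k x y : ℕ), addConGen (abelRel m) (x + k * m, y) (x, y + k * m) := by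
  intro k
  induction k with
  | zero => intro x y; simp; exact AddConGen.Rel.refl _
  | succ k ih =>
    intro x y
    have h1 : addConGen (abelRel m) (m, 0) (0, m) :=
      AddConGen.Rel.of _ _ ⟨rfl, rfl⟩
    have h2 := (addConGen (abelRel m)).add h1 (AddConGen.Rel.refl (x + k * m, y))
    have e1 : ((m, 0) : ℕ × ℕ) + (x + k * m, y) = (x + (k + 1) * m, y) := by
      simp [Prod.ext_iff]; ring
    have e2 : ((0, m) : ℕ × ℕ) + (x + k * m, y) = (x + k * m, y + m) := by
      simp [Prod.ext_iff]; ring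
    rw [e1, e2] at h2
    have h3 := (addConGen (abelRel m)).trans h2 (ih x (y + m))
    have : y + m + k * m = y + (k + 1) * m := by ring
    rwa [this] at h3

lemma con_eq (m : ℕ) : addConGen (abelRel m) = myCon m := by
  apply le_antisymm
  · apply AddCon.addConGen_le.mpr
    rintro p q ⟨rfl, rfl⟩
    exact ⟨by simp, by simp⟩
  · rintro ⟨x1, x2⟩ ⟨y1, y2⟩ ⟨h1, h2⟩
    dsimp at h1 h2
    rcases le_total x1 y1 with hle | hle
    · obtain ⟨k, hk⟩ : ∃ k, y1 = x1 + k * m := by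
        obtain ⟨k', hk'⟩ := (Nat.modEq_iff_dvd' hle).mp (h2 : Nat.ModEq m x1 y1)
        exact ⟨k', by rw [Nat.mul_comm k' m]; omega⟩
      have hx : x2 = y2 + k * m := by omega
      rw [hk, hx]
      exact ((addConGen (abelRel m)).symm (key m k x1 y2))
    · obtain ⟨k, hk⟩ : ∃ k, x1 = y1 + k * m := by
        obtain ⟨k', hk'⟩ := (Nat.modEq_iff_dvd' hle).mp ((h2 : Nat.ModEq m x1 y1).symm)
        exact ⟨k', by rw [Nat.mul_comm k' m]; omega⟩
      have hy : y2 = x2 + k * m := by omega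
      rw [hk, hy]
      exact key m k y1 x2

lemma mk'_add (m : ℕ) (p q : ℕ × ℕ) :
    @HAdd.hAdd (MAbel m) (MAbel m) (MAbel m) _ ((addConGen (abelRel m)).mk' p) ((addConGen (abelRel m)).mk' q) =
      (addConGen (abelRel m)).mk' (p + q) := rfl

lemma mk'_eq (m : ℕ) (p q : ℕ × ℕ) :
    @Eq (MAbel m) ((addConGen (abelRel m)).mk' p) ((addConGen (abelRel m)).mk' q) ↔
      addConGen (abelRel m) p q := AddCon.eq _

lemma mk'_nsmul (m n : ℕ) (p : ℕ × ℕ) :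
    @HSMul.hSMul ℕ (MAbel m) (MAbel m) _ n ((addConGen (abelRel m)).mk' p) = (addConGen (abelRel m)).mk' (n • p) := by
  rfl

lemma smul_a (n : ℕ) : n • ((1, 0) : ℕ × ℕ) = (n, 0) := by
  simp [Prod.ext_iff]

lemma smul_b (n : ℕ) : n • ((0, 1) : ℕ × ℕ) = (0, n) := by
  simp [Prod.ext_iff]

/-- If `a·X = b·Y` in `M_{abel,m}`, then either `X = a^{m-1}·Z, Y = b^{m-1}·Z`
or `X = b·Z, Y = a·Z` for some `Z`. -/
theorem stmt_6 (m : ℕ) (hm : 2 ≤ m) (X Y : MAbel m)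
    (h : MAbel.a m + X = MAbel.b m + Y) :
    (∃ Z : MAbel m, X = (m - 1) • MAbel.a m + Z ∧ Y = (m - 1) • MAbel.b m + Z) ∨
    (∃ Z : MAbel m, X = MAbel.b m + Z ∧ Y = MAbel.a m + Z) := by
  obtain ⟨⟨x1, x2⟩, rfl⟩ := (addConGen (abelRel m)).mk'_surjective X
  obtain ⟨⟨y1, y2⟩, rfl⟩ := (addConGen (abelRel m)).mk'_surjective Y
  rw [MAbel.a, MAbel.b, mk'_add, mk'_add, mk'_eq, con_eq] at h
  obtain ⟨h1, h2⟩ := h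
  simp only [Prod.mk_add_mk, Nat.zero_add, Nat.add_zero] at h1 h2
  -- h1 : 1 + x1 + x2 = y1 + (1 + y2), h2 : (1 + x1) % m = y1 % m
  rcases Nat.eq_zero_or_pos y1 with hy | hy
  · -- case y1 = 0 : first disjunct
    subst hy
    rw [Nat.zero_mod] at h2
    obtain ⟨k, hk⟩ := Nat.dvd_of_mod_eq_zero h2
    match k, hk with
    | 0, hk => omega
    | k + 1, hk =>
    rw [Nat.mul_add, Nat.mul_one] at hk
    have hx1 : m - 1 ≤ x1 := by omega
    left
    refine ⟨(addConGen (abelRel m)).mk' (x1 - (m - 1), x2), ?_, ?_⟩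
    · rw [MAbel.a, mk'_nsmul, smul_a, mk'_add, mk'_eq, con_eq]
      refine ⟨?_, ?_⟩
      · simp only [Prod.mk_add_mk]; omega
      · simp only [Prod.mk_add_mk]
        rw [show m - 1 + (x1 - (m - 1)) = x1 by omega]
    · rw [MAbel.b, mk'_nsmul, smul_b, mk'_add, mk'_eq, con_eq]
      refine ⟨?_, ?_⟩
      · simp only [Prod.mk_add_mk]; omega
      · simp only [Prod.mk_add_mk]
        rw [show x1 - (m - 1) = m * k by omega]
        simp [Nat.mul_mod_right]
  · -- case y1 ≥ 1 : second disjunct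
    right
    refine ⟨(addConGen (abelRel m)).mk' (y1 - 1, y2), ?_, ?_⟩
    · rw [MAbel.b, mk'_add, mk'_eq, con_eq]
      refine ⟨?_, ?_⟩
      · simp only [Prod.mk_add_mk]; omega
      · simp only [Prod.mk_add_mk]
        have h2' : Nat.ModEq m (1 + x1) (1 + (y1 - 1)) := by
          rw [show 1 + (y1 - 1) = y1 by omega]; exact h2
        rw [Nat.zero_add]; exact Nat.ModEq.add_left_cancel' 1 h2'
    · rw [MAbel.a, mk'_add, mk'_eq, con_eq]
      refine ⟨?_, ?_⟩
      · simp only [Prod.mk_add_mk]; omega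
      · simp only [Prod.mk_add_mk]
        rw [show 1 + (y1 - 1) = y1 by omega]
end

section
/- In the monoid M_{abel,m} (m ≥ 2), the set of minimal common right multiples of {a, b} is {a^m, ab} (i.e., mcm({a,b}) = {a·b, a^m} where a^m = b^m), each element of which divides every common multiple minimally: a^m and ab are common multiples of a and b, they are distinct, and every common multiple of a and b is divisible by a^m or by ab. -/
/-- `u` divides `v` in `M_{abel,m}`. -/
def MAbel.Dvd (m : ℕ) (u v : MAbel m) : Prop := ∃ x : MAbel m, v = u + x

/-- The invariant congruence: equal total length and equal `a`-count mod `m`. -/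
def invCon (m : ℕ) : AddCon (ℕ × ℕ) where
  r p q := p.1 + p.2 = q.1 + q.2 ∧ p.1 % m = q.1 % m
  iseqv := ⟨fun _ => ⟨rfl, rfl⟩, fun ⟨h1, h2⟩ => ⟨h1.symm, h2.symm⟩,
    fun ⟨h1, h2⟩ ⟨h3, h4⟩ => ⟨h1.trans h3, h2.trans h4⟩⟩
  add' := by
    rintro p q r s ⟨h1, h2⟩ ⟨h3, h4⟩
    refine ⟨by simp only [Prod.fst_add, Prod.snd_add]; omega, ?_⟩
    show (p.1 + r.1) % m = (q.1 + s.1) % m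
    rw [Nat.add_mod, h2, h4, ← Nat.add_mod]

lemma key_s7 {m : ℕ} {p q : ℕ × ℕ} (h : addConGen (abelRel m) p q) :
    p.1 + p.2 = q.1 + q.2 ∧ p.1 % m = q.1 % m := by
  have : addConGen (abelRel m) ≤ invCon m := by
    apply AddCon.addConGen_le.mpr
    rintro x y ⟨rfl, rfl⟩
    exact ⟨by simp, by simp⟩
  exact this h

lemma mk_eq {m : ℕ} (p q : ℕ × ℕ) (h : addConGen (abelRel m) p q) :
    (addConGen (abelRel m)).mk' p = (addConGen (abelRel m)).mk' q :=
  (AddCon.eq _).mpr h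

lemma base {m : ℕ} : addConGen (abelRel m) (m, 0) (0, m) :=
  AddConGen.Rel.of _ _ ⟨rfl, rfl⟩

lemma mk_add {m : ℕ} (p q : ℕ × ℕ) :
    (addConGen (abelRel m)).mk' p + (addConGen (abelRel m)).mk' q
      = (addConGen (abelRel m)).mk' (p + q) := (map_add _ _ _).symm

/-- `mcm({a,b}) = {aᵐ, ab}` in `M_{abel,m}`: both are common multiples of `a`
and `b`, they are distinct, and every common multiple of `a` and `b` is
divisible by `aᵐ` or by `ab`. -/
theorem stmt_7 (m : ℕ) (hm : 2 ≤ m) :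
    (MAbel.Dvd m (MAbel.a m) (m • MAbel.a m) ∧ MAbel.Dvd m (MAbel.b m) (m • MAbel.a m)) ∧
    (MAbel.Dvd m (MAbel.a m) (MAbel.a m + MAbel.b m) ∧
      MAbel.Dvd m (MAbel.b m) (MAbel.a m + MAbel.b m)) ∧
    m • MAbel.a m = m • MAbel.b m ∧
    m • MAbel.a m ≠ MAbel.a m + MAbel.b m ∧
    (∀ u : MAbel m, MAbel.Dvd m (MAbel.a m) u → MAbel.Dvd m (MAbel.b m) u →
      MAbel.Dvd m (m • MAbel.a m) u ∨ MAbel.Dvd m (MAbel.a m + MAbel.b m) u) := by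
  set c := addConGen (abelRel m) with hc
  have hma : m • MAbel.a m = c.mk' (m, 0) := by
    show m • (c.mk' ((1, 0) : ℕ × ℕ) : c.Quotient) = c.mk' (m, 0)
    rw [← map_nsmul]
    congr 1
    ext <;> simp
  have hmb : m • MAbel.b m = c.mk' (0, m) := by
    show m • (c.mk' ((0, 1) : ℕ × ℕ) : c.Quotient) = c.mk' (0, m)
    rw [← map_nsmul]
    congr 1
    ext <;> simp
  have hab : MAbel.a m + MAbel.b m = c.mk' (1, 1) := by
    rw [MAbel.a, MAbel.b]; erw [mk_add]; rfl
  refine ⟨⟨?_, ?_⟩, ⟨?_, ?_⟩, ?_, ?_, ?_⟩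
  · exact ⟨c.mk' (m - 1, 0), by
      rw [hma, MAbel.a]; erw [mk_add]; congr 1; ext <;> simp <;> omega⟩
  · refine ⟨c.mk' (0, m - 1), ?_⟩
    rw [hma, MAbel.b]; erw [mk_add]; rw [mk_eq _ _ base]
    congr 1; ext <;> simp <;> omega
  · exact ⟨MAbel.b m, rfl⟩
  · exact ⟨MAbel.a m, add_comm _ _⟩
  · rw [hma, hmb]; exact mk_eq _ _ base
  · rw [hma, hab]
    intro h
    have := key_s7 ((AddCon.eq _).mp h)
    simp at this
    omega
  · rintro u ⟨x, hx⟩ ⟨y, hy⟩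
    obtain ⟨⟨r, s⟩, rfl⟩ := AddCon.mk'_surjective x
    obtain ⟨⟨r', s'⟩, rfl⟩ := AddCon.mk'_surjective y
    rw [MAbel.a] at hx; erw [mk_add] at hx
    rw [MAbel.b] at hy; erw [mk_add] at hy
    have hk := key_s7 ((AddCon.eq _).mp (hx ▸ hy : c.mk' ((1,0)+(r,s)) = c.mk' ((0,1)+(r',s'))))
    simp only [Prod.fst_add, Prod.snd_add] at hk
    rcases Nat.eq_zero_or_pos s with hs | hs
    · -- s = 0 : u = mk (1+r, 0), show mᵃ divides
      subst hs
      left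
      have hle : m ≤ 1 + r := by
        have h1 : (0 + r') % m = (1 + r) % m := hk.2.symm
        have h2 : r' < 1 + r := by omega
        have hmod : r' ≡ 1 + r [MOD m] := by
          show r' % m = (1 + r) % m
          simpa using h1
        obtain ⟨k, hkk⟩ := (Nat.modEq_iff_dvd' (le_of_lt h2)).mp hmod
        have hk0 : 1 ≤ k := by rcases k with _ | k <;> omega
        have hmk : m * 1 ≤ m * k := Nat.mul_le_mul_left m hk0
        omega
      refine ⟨c.mk' (1 + r - m, 0), ?_⟩
      rw [hx, hma]; erw [mk_add]
      congr 1; ext <;> simp <;> omega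
    · -- s ≥ 1 : ab divides
      right
      refine ⟨c.mk' (r, s - 1), ?_⟩
      rw [hx, hab]; erw [mk_add]
      congr 1; ext <;> simp <;> omega
end

section
/- In the monoid G⁺_{B_ii} = ⟨a,b,c | cbb = bba, ab = bc, ac = ca⟩_mo, if b·b·X = c·Y for positive words X, Y, then there exists a positive word Z with X = a·Z and Y = b·b·Z (equalities in the monoid). -/
namespace Bii

/-- Letters `a`, `b`, `c` of the free monoid on three letters. -/
def A : FreeMonoid (Fin 3) := FreeMonoid.of 0
def B : FreeMonoid (Fin 3) := FreeMonoid.of 1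
def C : FreeMonoid (Fin 3) := FreeMonoid.of 2

/-- The defining relations `cbb = bba`, `ab = bc`, `ac = ca` of `G⁺_{B_ii}`. -/
def rel : FreeMonoid (Fin 3) → FreeMonoid (Fin 3) → Prop := fun u v =>
  (u = C * B * B ∧ v = B * B * A) ∨ (u = A * B ∧ v = B * C) ∨ (u = A * C ∧ v = C * A)

/-- The monoid `G⁺_{B_ii}`. -/
def GBii := (conGen rel).Quotient

instance : Monoid GBii := inferInstanceAs (Monoid (conGen rel).Quotient)

/-- Generators of `G⁺_{B_ii}`. -/
def a : GBii := (conGen rel).mk' A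
def b : GBii := (conGen rel).mk' B
def c : GBii := (conGen rel).mk' C

abbrev W := FreeMonoid (Fin 3)
abbrev cg : Con W := conGen rel

lemma cg_cbb : cg (C * B * B) (B * B * A) := ConGen.Rel.of _ _ (Or.inl ⟨rfl, rfl⟩)
lemma cg_ab : cg (A * B) (B * C) := ConGen.Rel.of _ _ (Or.inr (Or.inl ⟨rfl, rfl⟩))
lemma cg_ac : cg (A * C) (C * A) := ConGen.Rel.of _ _ (Or.inr (Or.inr ⟨rfl, rfl⟩))
lemma cg_mul_left (w : W) {u v : W} (h : cg u v) : cg (w * u) (w * v) := (cg.refl w).mul h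
lemma cg_mul_right {u v : W} (h : cg u v) (w : W) : cg (u * w) (v * w) := h.mul (cg.refl w)

lemma cg_I (k : ℕ) : cg (A ^ k * B) (B * C ^ k) := by
  induction k with
  | zero => simp [cg.refl]
  | succ k ih =>
    have h1 : cg (A ^ (k+1) * B) (A * (B * C ^ k)) := by
      rw [pow_succ', mul_assoc]; exact cg_mul_left A ih
    have h2 : cg (A * (B * C ^ k)) (B * C ^ (k+1)) := by
      have h := cg_mul_right cg_ab (C ^ k)
      rw [mul_assoc, mul_assoc] at h
      rw [pow_succ']; exact h
    exact h1.trans h2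

lemma cg_II (k : ℕ) : cg (C ^ k * (B * B)) (B * B * A ^ k) := by
  induction k with
  | zero => simp [cg.refl]
  | succ k ih =>
    have h1 : cg (C ^ (k+1) * (B * B)) (C ^ k * (B * B * A)) := by
      rw [pow_succ, mul_assoc]
      have h := cg_mul_left (C ^ k) cg_cbb
      rw [mul_assoc C B B] at h
      exact h
    have h2 : cg (C ^ k * (B * B * A)) (B * B * A ^ (k+1)) := by
      rw [pow_succ, ← mul_assoc (B*B), ← mul_assoc (C ^ k) (B*B) A]
      exact cg_mul_right ih A
    exact h1.trans h2

lemma cg_ca (p : ℕ) : cg (C * A ^ p) (A ^ p * C) := by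
  induction p with
  | zero => simp [cg.refl]
  | succ p ih =>
    have h1 : cg (C * A ^ (p+1)) (A * (C * A ^ p)) := by
      have h := cg_mul_right cg_ac.symm (A ^ p)
      rw [mul_assoc, mul_assoc] at h
      rw [pow_succ']; exact h
    have h2 : cg (A * (C * A ^ p)) (A ^ (p+1) * C) := by
      rw [pow_succ', mul_assoc]; exact cg_mul_left A ih
    exact h1.trans h2

lemma cg_cpa (q p : ℕ) : cg (C ^ q * A ^ p) (A ^ p * C ^ q) := by
  induction q with
  | zero => simp [cg.refl]
  | succ q ih =>
    have h1 : cg (C ^ (q+1) * A ^ p) (C ^ q * (A ^ p * C)) := by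
      rw [pow_succ, mul_assoc]
      exact cg_mul_left (C ^ q) (cg_ca p)
    have h2 : cg (C ^ q * (A ^ p * C)) (A ^ p * C ^ (q+1)) := by
      rw [pow_succ, ← mul_assoc, ← mul_assoc]
      exact cg_mul_right ih C
    exact h1.trans h2
def nf0 (p q : ℕ) : W := A ^ p * C ^ q
def nf (p q r n : ℕ) : W := A ^ p * (C ^ q * (B * (A ^ r * B ^ n)))

lemma cg_L1 (q p : ℕ) : cg (A ^ q * (B * A ^ p)) (B * (A ^ p * C ^ q)) := by
  have h1 : cg (A ^ q * (B * A ^ p)) (B * (C ^ q * A ^ p)) := by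
    have h := cg_mul_right (cg_I q) (A ^ p)
    rw [mul_assoc, mul_assoc] at h
    exact h
  exact h1.trans (cg_mul_left B (cg_cpa q p))

lemma cg_L2 (r p : ℕ) : cg (C ^ r * (B * (A ^ p * B))) (B * (A ^ p * (B * A ^ r))) := by
  have h1 : cg (C ^ r * (B * (A ^ p * B))) (C ^ r * (B * (B * C ^ p))) :=
    cg_mul_left _ (cg_mul_left B (cg_I p))
  have h2 : cg (C ^ r * (B * (B * C ^ p))) (B * (B * (A ^ r * C ^ p))) := by
    have h := cg_mul_right (cg_II r) (C ^ p)
    rw [mul_assoc, mul_assoc, mul_assoc, mul_assoc] at h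
    exact h
  have h3 : cg (B * (B * (A ^ r * C ^ p))) (B * (B * (C ^ p * A ^ r))) :=
    cg_mul_left B (cg_mul_left B (cg_cpa p r).symm)
  have h4 : cg (B * (B * (C ^ p * A ^ r))) (B * (A ^ p * (B * A ^ r))) := by
    have h := cg_mul_right (cg_mul_left B (cg_I p).symm) (A ^ r)
    rw [mul_assoc, mul_assoc, mul_assoc, mul_assoc] at h
    exact h
  exact ((h1.trans h2).trans h3).trans h4

lemma step_A0 (p q : ℕ) : A * nf0 p q = nf0 (p+1) q := by
  rw [nf0, nf0, pow_succ', mul_assoc]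

lemma step_A (p q r n : ℕ) : A * nf p q r n = nf (p+1) q r n := by
  rw [nf, nf, pow_succ', mul_assoc]

lemma step_C0 (p q : ℕ) : cg (C * nf0 p q) (nf0 p (q+1)) := by
  have h := cg_mul_right (cg_ca p) (C ^ q)
  rw [nf0, nf0, pow_succ']
  simp only [mul_assoc] at h ⊢
  exact h

lemma step_C (p q r n : ℕ) : cg (C * nf p q r n) (nf p (q+1) r n) := by
  have h := cg_mul_right (cg_ca p) (C ^ q * (B * (A ^ r * B ^ n)))
  rw [nf, nf, pow_succ']
  simp only [mul_assoc] at h ⊢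
  exact h

lemma step_B0 (p q : ℕ) : cg (B * nf0 p q) (nf q 0 p 0) := by
  have h := (cg_L1 q p).symm
  simp only [nf0, nf, pow_zero, one_mul, mul_one]
  exact h

lemma step_B (p q r n : ℕ) : cg (B * nf p q r n) (nf q r p (n+1)) := by
  have h1 : cg (B * nf p q r n) (A ^ q * (B * A ^ p) * (B * (A ^ r * B ^ n))) := by
    rw [nf, ← mul_assoc B (A ^ p), ← mul_assoc (B * A ^ p)]
    exact cg_mul_right (cg_L1 q p).symm _
  have h2 : cg (A ^ q * (B * A ^ p) * (B * (A ^ r * B ^ n)))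
      (A ^ q * (C ^ r * (B * (A ^ p * B)) * B ^ n)) := by
    have hL2 : cg (B * (A ^ p * (B * A ^ r)) * B ^ n) (C ^ r * (B * (A ^ p * B)) * B ^ n) :=
      cg_mul_right (cg_L2 r p).symm (B ^ n)
    have h := cg_mul_left (A ^ q) hL2
    rw [mul_assoc]
    have e : B * A ^ p * (B * (A ^ r * B ^ n)) = B * (A ^ p * (B * A ^ r)) * B ^ n := by
      simp only [mul_assoc]
    rw [e]
    exact h
  have h3 : A ^ q * (C ^ r * (B * (A ^ p * B)) * B ^ n) = nf q r p (n+1) := by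
    rw [nf, pow_succ']
    simp only [mul_assoc]
  rw [← h3]
  exact h1.trans h2

lemma toNF (w : W) :
    (∃ p q, cg w (nf0 p q)) ∨ (∃ p q r n, cg w (nf p q r n)) := by
  induction w using FreeMonoid.inductionOn' with
  | one => left; exact ⟨0, 0, by simp [nf0, cg.refl]⟩
  | of_mul x w ih =>
    fin_cases x
    · rcases ih with ⟨p, q, h⟩ | ⟨p, q, r, n, h⟩
      · left; exact ⟨p+1, q, by rw [← step_A0]; exact cg_mul_left A h⟩
      · right; exact ⟨p+1, q, r, n, by rw [← step_A]; exact cg_mul_left A h⟩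
    · rcases ih with ⟨p, q, h⟩ | ⟨p, q, r, n, h⟩
      · right; exact ⟨q, 0, p, 0, (cg_mul_left B h).trans (step_B0 p q)⟩
      · right; exact ⟨q, r, p, n+1, (cg_mul_left B h).trans (step_B p q r n)⟩
    · rcases ih with ⟨p, q, h⟩ | ⟨p, q, r, n, h⟩
      · left; exact ⟨p, q+1, (cg_mul_left C h).trans (step_C0 p q)⟩
      · right; exact ⟨p, q+1, r, n, (cg_mul_left C h).trans (step_C p q r n)⟩
open Fin.NatCast

@[ext] structure M where
  v : Fin 3 → ℕ
  n : ℕ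

instance : Monoid M where
  one := ⟨0, 0⟩
  mul x y := ⟨fun i => x.v i + y.v (i + (x.n : Fin 3)), x.n + y.n⟩
  mul_assoc x y z := by
    ext i
    · show x.v i + y.v (i + (x.n : Fin 3)) + z.v (i + ((x.n + y.n : ℕ) : Fin 3))
          = x.v i + (y.v (i + (x.n : Fin 3)) + z.v (i + (x.n : Fin 3) + (y.n : Fin 3)))
      rw [Nat.cast_add, ← add_assoc i, add_assoc]
    · exact add_assoc x.n y.n z.n
  one_mul x := by
    ext i
    · show 0 + x.v (i + ((0 : ℕ) : Fin 3)) = x.v i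
      simp
    · exact zero_add x.n
  mul_one x := by
    ext i
    · show x.v i + 0 = x.v i
      simp
    · exact add_zero x.n

@[simp] lemma M_mul_v (x y : M) (i : Fin 3) :
    (x * y).v i = x.v i + y.v (i + (x.n : Fin 3)) := rfl
@[simp] lemma M_mul_n (x y : M) : (x * y).n = x.n + y.n := rfl
@[simp] lemma M_one_v (i : Fin 3) : (1 : M).v i = 0 := rfl
@[simp] lemma M_one_n : (1 : M).n = 0 := rfl

def fgen : Fin 3 → M := ![⟨Pi.single 0 1, 0⟩, ⟨0, 1⟩, ⟨Pi.single 1 1, 0⟩]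

def φ : W →* M := FreeMonoid.lift fgen

lemma phiA : φ A = ⟨Pi.single 0 1, 0⟩ := by simp [φ, A, fgen]
lemma phiB : φ B = ⟨0, 1⟩ := by simp [φ, B, fgen]
lemma phiC : φ C = ⟨Pi.single 1 1, 0⟩ := by simp [φ, C, fgen]

lemma Mpow_vec (v : Fin 3 → ℕ) (p : ℕ) : (⟨v, 0⟩ : M) ^ p = ⟨p • v, 0⟩ := by
  induction p with
  | zero => ext i <;> simp
  | succ p ih =>
    rw [pow_succ, ih]
    ext i
    · simp [succ_nsmul, add_one_mul]
    · simp

lemma Mpow_b (n : ℕ) : (⟨0, 1⟩ : M) ^ n = ⟨0, n⟩ := by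
  induction n with
  | zero => ext i <;> simp
  | succ n ih => rw [pow_succ, ih]; ext i <;> simp

lemma phi_nf0 (p q : ℕ) : φ (nf0 p q) = ⟨![p, q, 0], 0⟩ := by
  rw [nf0, map_mul, map_pow, map_pow, phiA, phiC, Mpow_vec, Mpow_vec]
  ext i
  · fin_cases i <;> simp [Pi.single_apply]
  · simp

lemma phi_nf (p q r n : ℕ) : φ (nf p q r n) = ⟨![p, q, r], n + 1⟩ := by
  rw [nf, map_mul, map_mul, map_mul, map_mul, map_pow, map_pow, map_pow, map_pow,
    phiA, phiB, phiC, Mpow_vec, Mpow_vec, Mpow_vec, Mpow_b]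
  ext i
  · fin_cases i <;> simp [Pi.single_apply]
  · simp; omega

lemma cg_phi {u v : W} (h : cg u v) : φ u = φ v := by
  have hle : cg ≤ Con.ker φ := by
    apply Con.conGen_le.mpr
    rintro x y (⟨rfl, rfl⟩ | ⟨rfl, rfl⟩ | ⟨rfl, rfl⟩) <;>
    · show φ _ = φ _
      simp only [map_mul, phiA, phiB, phiC]
      ext i
      · fin_cases i <;> simp [Pi.single_apply]
      · simp
  exact hle h

lemma mk_eq {u v : W} (h : cg u v) : (conGen rel).mk' u = (conGen rel).mk' v :=
  (Con.eq _).mpr h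

lemma eq_mk {u v : W} (h : (conGen rel).mk' u = (conGen rel).mk' v) : cg u v :=
  (Con.eq _).mp h

/-- Lemma 5.2: if `bb·X = c·Y` in `G⁺_{B_ii}`, then `X = a·Z` and `Y = bb·Z`
for some `Z`. -/
theorem stmt_15 (X Y : GBii) (h : b * b * X = c * Y) :
    ∃ Z : GBii, X = a * Z ∧ Y = b * b * Z := by
  obtain ⟨x, rfl⟩ := Con.mk'_surjective X
  obtain ⟨y, rfl⟩ := Con.mk'_surjective Y
  have hxy : cg (B * (B * x)) (C * y) := by
    apply eq_mk
    rw [map_mul, map_mul, map_mul]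
    exact (mul_assoc b b ((conGen rel).mk' x)).symm.trans h
  rcases toNF y with ⟨p', q', hy⟩ | ⟨p', q', r', m, hy⟩
  · -- y ≈ nf0 p' q' : impossible
    exfalso
    have hcy : cg (C * y) (nf0 p' (q'+1)) := (cg_mul_left C hy).trans (step_C0 p' q')
    rcases toNF x with ⟨p, q, hx⟩ | ⟨p, q, r, n, hx⟩
    · have hbbx : cg (B * (B * x)) (nf 0 p q 1) := by
        have h1 : cg (B * x) (nf q 0 p 0) := (cg_mul_left B hx).trans (step_B0 p q)
        exact (cg_mul_left B h1).trans (step_B q 0 p 0)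
      have hk := cg_phi (hbbx.symm.trans (hxy.trans hcy))
      rw [phi_nf, phi_nf0] at hk
      exact absurd (congrArg M.n hk) (by simp)
    · have hbbx : cg (B * (B * x)) (nf r p q (n+2)) := by
        have h1 : cg (B * x) (nf q r p (n+1)) := (cg_mul_left B hx).trans (step_B p q r n)
        exact (cg_mul_left B h1).trans (step_B q r p (n+1))
      have hk := cg_phi (hbbx.symm.trans (hxy.trans hcy))
      rw [phi_nf, phi_nf0] at hk
      exact absurd (congrArg M.n hk) (by simp)
  · -- y ≈ nf p' q' r' m
    have hcy : cg (C * y) (nf p' (q'+1) r' m) := (cg_mul_left C hy).trans (step_C p' q' r' m)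
    rcases toNF x with ⟨p, q, hx⟩ | ⟨p, q, r, n, hx⟩
    · -- x ≈ nf0 p q
      have hbbx : cg (B * (B * x)) (nf 0 p q 1) := by
        have h1 : cg (B * x) (nf q 0 p 0) := (cg_mul_left B hx).trans (step_B0 p q)
        exact (cg_mul_left B h1).trans (step_B q 0 p 0)
      have key := cg_phi (hbbx.symm.trans (hxy.trans hcy))
      rw [phi_nf, phi_nf] at key
      have hvec := congrArg M.v key
      have h0 : (0 : ℕ) = p' := congrFun hvec 0
      have h1 : p = q' + 1 := congrFun hvec 1
      have h2 : q = r' := congrFun hvec 2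
      have hm : m = 1 := by have := congrArg M.n key; simp at this; omega
      refine ⟨(conGen rel).mk' (nf0 q' q), ?_, ?_⟩
      · have hx' : cg x (A * nf0 q' q) := by rw [step_A0, ← h1]; exact hx
        have P : (conGen rel).mk' x
            = (conGen rel).mk' A * (conGen rel).mk' (nf0 q' q) := by
          rw [← map_mul]; exact mk_eq hx'
        exact P
      · have hy' : cg y (B * (B * nf0 q' q)) := by
          have hb2 : cg (B * (B * nf0 q' q)) (nf 0 q' q 1) := by
            have hs1 : cg (B * nf0 q' q) (nf q 0 q' 0) := step_B0 q' q
            exact (cg_mul_left B hs1).trans (step_B q 0 q' 0)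
          have hy2 : cg y (nf 0 q' q 1) := by
            rw [hm] at hy
            rw [h0, h2]
            exact hy
          exact hy2.trans hb2.symm
        have P : (conGen rel).mk' y
            = (conGen rel).mk' B * ((conGen rel).mk' B * (conGen rel).mk' (nf0 q' q)) := by
          rw [← map_mul, ← map_mul]; exact mk_eq hy'
        exact P.trans (mul_assoc b b ((conGen rel).mk' (nf0 q' q))).symm
    · -- x ≈ nf p q r n
      have hbbx : cg (B * (B * x)) (nf r p q (n+2)) := by
        have h1 : cg (B * x) (nf q r p (n+1)) := (cg_mul_left B hx).trans (step_B p q r n)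
        exact (cg_mul_left B h1).trans (step_B q r p (n+1))
      have key := cg_phi (hbbx.symm.trans (hxy.trans hcy))
      rw [phi_nf, phi_nf] at key
      have hvec := congrArg M.v key
      have h0 : r = p' := congrFun hvec 0
      have h1 : p = q' + 1 := congrFun hvec 1
      have h2 : q = r' := congrFun hvec 2
      have hm : m = n + 2 := by have := congrArg M.n key; simp at this; omega
      refine ⟨(conGen rel).mk' (nf q' q r n), ?_, ?_⟩
      · have hx' : cg x (A * nf q' q r n) := by rw [step_A, ← h1]; exact hx
        have P : (conGen rel).mk' x
            = (conGen rel).mk' A * (conGen rel).mk' (nf q' q r n) := by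
          rw [← map_mul]; exact mk_eq hx'
        exact P
      · have hy' : cg y (B * (B * nf q' q r n)) := by
          have hb2 : cg (B * (B * nf q' q r n)) (nf r q' q (n+2)) := by
            have hs1 : cg (B * nf q' q r n) (nf q r q' (n+1)) := step_B q' q r n
            exact (cg_mul_left B hs1).trans (step_B q r q' (n+1))
          have hy2 : cg y (nf r q' q (n+2)) := by
            rw [hm] at hy
            rw [h0, h2]
            exact hy
          exact hy2.trans hb2.symm
        have P : (conGen rel).mk' y
            = (conGen rel).mk' B * ((conGen rel).mk' B * (conGen rel).mk' (nf q' q r n)) := by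
          rw [← map_mul, ← map_mul]; exact mk_eq hy'
        exact P.trans (mul_assoc b b ((conGen rel).mk' (nf q' q r n))).symm

end Bii
end

section
/- In the monoid G⁺_{B_ii} = ⟨a,b,c | cbb = bba, ab = bc, ac = ca⟩_mo, for natural numbers i < j, if cⁱb·X = cʲb·Y then there exist a natural number k and a positive word Z with X = cᵏb·a^{j-i}·Z and Y = cᵏb·Z. -/
namespace Bii

/-! ### ZMod 3 facts -/
lemma z3cases : ∀ r : ZMod 3, r = 0 ∨ r = 1 ∨ r = 2 := by decide
lemma zs01 : (0:ZMod 3) - 1 = 2 := by decide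
lemma zs11 : (1:ZMod 3) - 1 = 0 := by decide
lemma zs21 : (2:ZMod 3) - 1 = 1 := by decide
lemma zne10 : (1:ZMod 3) ≠ 0 := by decide
lemma zne20 : (2:ZMod 3) ≠ 0 := by decide
lemma zne01 : (0:ZMod 3) ≠ 1 := by decide
lemma zne21 : (2:ZMod 3) ≠ 1 := by decide
lemma zne02 : (0:ZMod 3) ≠ 2 := by decide
lemma zne12 : (1:ZMod 3) ≠ 2 := by decide
lemma zneg1 : (-1:ZMod 3) = 2 := by decide
lemma zneg2 : (-2:ZMod 3) = 1 := by decide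
lemma zs02 : (0:ZMod 3) - 2 = 1 := by decide
lemma zs12 : (1:ZMod 3) - 2 = 2 := by decide
lemma zs22 : (2:ZMod 3) - 2 = 0 := by decide

/-! ### The model monoid -/
@[ext] structure Mo where
  n : ℕ
  f : ZMod 3 → ℕ

instance : One Mo := ⟨⟨0, fun _ => 0⟩⟩
instance : Mul Mo := ⟨fun x y => ⟨x.n + y.n, fun r => x.f r + y.f (r - (x.n : ZMod 3))⟩⟩
lemma Mo.mul_def (x y : Mo) :
    x * y = ⟨x.n + y.n, fun r => x.f r + y.f (r - (x.n : ZMod 3))⟩ := rfl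
lemma Mo.one_def : (1 : Mo) = ⟨0, fun _ => 0⟩ := rfl
instance : Monoid Mo where
  mul_assoc x y z := by
    refine Mo.ext ?_ ?_
    · show x.n + y.n + z.n = x.n + (y.n + z.n); ring
    · funext r
      show (x.f r + y.f (r - (x.n:ZMod 3))) + z.f (r - ((x.n + y.n : ℕ) : ZMod 3))
          = x.f r + (y.f (r - x.n) + z.f ((r - (x.n:ZMod 3)) - (y.n : ZMod 3)))
      push_cast
      rw [sub_sub, add_assoc]
  one_mul x := by
    refine Mo.ext ?_ ?_
    · show 0 + x.n = x.n; ring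
    · funext r
      show 0 + x.f (r - ((0:ℕ):ZMod 3)) = x.f r
      simp
  mul_one x := by
    refine Mo.ext ?_ ?_
    · show x.n + 0 = x.n; ring
    · funext r
      show x.f r + 0 = x.f r
      simp

def ga : Mo := ⟨0, fun r => if r = 1 then 1 else 0⟩
def gb : Mo := ⟨1, fun _ => 0⟩
def gc : Mo := ⟨0, fun r => if r = 0 then 1 else 0⟩
def gen : Fin 3 → Mo := ![ga, gb, gc]

lemma ga_mul_n (t : Mo) : (ga * t).n = t.n := by simp [Mo.mul_def, ga]
lemma ga_mul_f0 (t : Mo) : (ga * t).f 0 = t.f 0 := by simp [Mo.mul_def, ga, zne01]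
lemma ga_mul_f1 (t : Mo) : (ga * t).f 1 = t.f 1 + 1 := by
  simp [Mo.mul_def, ga, add_comm]
lemma ga_mul_f2 (t : Mo) : (ga * t).f 2 = t.f 2 := by simp [Mo.mul_def, ga, zne21]
lemma gb_mul_n (t : Mo) : (gb * t).n = t.n + 1 := by
  simp [Mo.mul_def, gb, add_comm]
lemma gb_mul_f0 (t : Mo) : (gb * t).f 0 = t.f 2 := by
  simp [Mo.mul_def, gb, zs01, zneg1]
lemma gb_mul_f1 (t : Mo) : (gb * t).f 1 = t.f 0 := by
  simp [Mo.mul_def, gb, zs11]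
lemma gb_mul_f2 (t : Mo) : (gb * t).f 2 = t.f 1 := by
  simp [Mo.mul_def, gb, zs21]
lemma gc_mul_n (t : Mo) : (gc * t).n = t.n := by simp [Mo.mul_def, gc]
lemma gc_mul_f0 (t : Mo) : (gc * t).f 0 = t.f 0 + 1 := by
  simp [Mo.mul_def, gc, add_comm]
lemma gc_mul_f1 (t : Mo) : (gc * t).f 1 = t.f 1 := by simp [Mo.mul_def, gc, zne10]
lemma gc_mul_f2 (t : Mo) : (gc * t).f 2 = t.f 2 := by simp [Mo.mul_def, gc, zne20]

def toM : FreeMonoid (Fin 3) →* Mo := FreeMonoid.lift gen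

lemma toM_rel : ∀ u v, rel u v → (Con.ker toM) u v := by
  rintro u v (⟨rfl, rfl⟩ | ⟨rfl, rfl⟩ | ⟨rfl, rfl⟩) <;>
  · show toM _ = toM _
    simp only [A, B, C, map_mul, toM, FreeMonoid.lift_eval_of]
    refine Mo.ext (by simp [gen, ga, gb, gc, Mo.mul_def]) ?_
    funext r
    rcases z3cases r with rfl | rfl | rfl <;>
      simp [gen, ga, gb, gc, Mo.mul_def, zs01, zs11, zs21, zs02, zs12, zs22,
        zneg1, zneg2, zne10, zne20, zne01, zne21, zne02, zne12]

def phi : GBii →* Mo := Con.lift _ toM (Con.conGen_le.2 toM_rel)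

lemma phi_mk (w : FreeMonoid (Fin 3)) : phi ((conGen rel).mk' w) = toM w :=
  Con.lift_mk' _ _

lemma phi_a : phi a = ga := by
  rw [a, phi_mk]; exact FreeMonoid.lift_eval_of _ _
lemma phi_b : phi b = gb := by
  rw [b, phi_mk]; exact FreeMonoid.lift_eval_of _ _
lemma phi_c : phi c = gc := by
  rw [c, phi_mk]; exact FreeMonoid.lift_eval_of _ _

/-! ### relations in GBii -/
lemma rel_of {u v : FreeMonoid (Fin 3)} (h : rel u v) :
    (conGen rel).mk' u = (conGen rel).mk' v := by
  exact (Con.eq _).2 (ConGen.Rel.of _ _ h)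

lemma hcbb : c * b * b = b * b * a := by
  have := rel_of (Or.inl ⟨rfl, rfl⟩)
  simp only [map_mul] at this; exact this
lemma hab : a * b = b * c := by
  have := rel_of (Or.inr (Or.inl ⟨rfl, rfl⟩))
  simp only [map_mul] at this; exact this
lemma hac : a * c = c * a := by
  have := rel_of (Or.inr (Or.inr ⟨rfl, rfl⟩))
  simp only [map_mul] at this; exact this

lemma hab' (x : GBii) : a * (b * x) = b * (c * x) := by
  rw [← mul_assoc, hab, mul_assoc]
lemma hac' (x : GBii) : a * (c * x) = c * (a * x) := by
  rw [← mul_assoc, hac, mul_assoc]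
lemma hcbb' (x : GBii) : c * (b * (b * x)) = b * (b * (a * x)) := by
  rw [← mul_assoc, ← mul_assoc, hcbb, mul_assoc, mul_assoc]

lemma a_cpow (k : ℕ) (x : GBii) : a * (c ^ k * x) = c ^ k * (a * x) := by
  induction k with
  | zero => simp
  | succ k ih =>
    rw [pow_succ', mul_assoc, hac', ih, ← mul_assoc, ← mul_assoc, ← pow_succ']
lemma apow_c (k : ℕ) (x : GBii) : a ^ k * (c * x) = c * (a ^ k * x) := by
  induction k with
  | zero => simp
  | succ k ih =>
    rw [pow_succ', mul_assoc, mul_assoc, ih, hac', ← mul_assoc, ← mul_assoc]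
lemma apow_cpow (k p : ℕ) (x : GBii) : a ^ k * (c ^ p * x) = c ^ p * (a ^ k * x) := by
  induction p generalizing x with
  | zero => simp
  | succ p ih =>
    rw [pow_succ', mul_assoc, apow_c, ih, ← mul_assoc, ← mul_assoc, ← pow_succ']
lemma b_cpow (k : ℕ) (x : GBii) : b * (c ^ k * x) = a ^ k * (b * x) := by
  induction k generalizing x with
  | zero => simp
  | succ k ih =>
    rw [pow_succ, mul_assoc, ih, ← hab', ← mul_assoc, ← pow_succ]
lemma L3 (p : ℕ) (x : GBii) :
    c * (b * (c ^ p * (b * x))) = b * (c ^ p * (b * (a * x))) := by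
  rw [b_cpow, ← apow_c, hcbb', ← b_cpow]
lemma L5 (m p : ℕ) (x : GBii) :
    c ^ m * (b * (c ^ p * (b * x))) = b * (c ^ p * (b * (a ^ m * x))) := by
  induction m generalizing x with
  | zero => simp
  | succ m ih =>
    rw [pow_succ', mul_assoc, ih, L3, ← mul_assoc a (a^m) x, ← pow_succ']

/-! ### normal forms -/
def psiv (n x0 x1 x2 : ℕ) : GBii :=
  match n with
  | 0 => c ^ x0 * a ^ x1
  | 1 => c ^ x0 * (b * (c ^ x1 * a ^ x2))
  | (m+2) => c ^ x0 * (b * (c ^ x1 * (b * (c ^ x2 * b ^ m))))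

def psi (t : Mo) : GBii := psiv t.n (t.f 0) (t.f 1) (t.f 2)

def Good (t : Mo) : Prop := t.n = 0 → t.f 2 = 0

lemma step_c (t : Mo) : c * psi t = psi (gc * t) := by
  simp only [psi, gc_mul_n, gc_mul_f0, gc_mul_f1, gc_mul_f2]
  rcases t with ⟨n, f⟩
  rcases n with _ | _ | m <;> simp only [psiv] <;>
    rw [← mul_assoc, ← pow_succ']

lemma step_a (t : Mo) : a * psi t = psi (ga * t) := by
  simp only [psi, ga_mul_n, ga_mul_f0, ga_mul_f1, ga_mul_f2]
  rcases t with ⟨n, f⟩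
  rcases n with _ | _ | m <;> simp only [psiv]
  · rw [a_cpow, ← pow_succ']
  · rw [a_cpow, hab', ← mul_assoc c (c ^ f 1) _, ← pow_succ']
  · rw [a_cpow, hab', ← mul_assoc c (c ^ f 1) _, ← pow_succ']

lemma step_b (t : Mo) (ht : Good t) : b * psi t = psi (gb * t) := by
  simp only [psi, gb_mul_n, gb_mul_f0, gb_mul_f1, gb_mul_f2]
  rcases t with ⟨n, f⟩
  rcases n with _ | _ | m <;> simp only [psiv]
  · have h2 : f 2 = 0 := ht rfl
    rw [h2, pow_zero, one_mul]
  · symm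
    rw [L5, apow_cpow]
    simp
  · symm
    rw [L5, apow_cpow, pow_succ', ← b_cpow]

lemma toM_of (x : Fin 3) : toM (FreeMonoid.of x) = gen x := FreeMonoid.lift_eval_of _ _

def mkg (x : Fin 3) : GBii := (conGen rel).mk' (FreeMonoid.of x)

lemma step_all (x : Fin 3) (t : Mo) (ht : Good t) :
    mkg x * psi t = psi (gen x * t) := by
  obtain ⟨x, hx⟩ := x
  interval_cases x
  · exact step_a t
  · exact step_b t ht
  · exact step_c t

lemma good_ga (t : Mo) (ht : Good t) : Good (ga * t) := by
  intro h
  rw [ga_mul_n] at h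
  rw [ga_mul_f2]
  exact ht h
lemma good_gb (t : Mo) (ht : Good t) : Good (gb * t) := by
  intro h
  rw [gb_mul_n] at h
  omega
lemma good_gc (t : Mo) (ht : Good t) : Good (gc * t) := by
  intro h
  rw [gc_mul_n] at h
  rw [gc_mul_f2]
  exact ht h

lemma good_mul_gen (x : Fin 3) (t : Mo) (ht : Good t) : Good (gen x * t) := by
  obtain ⟨x, hx⟩ := x
  interval_cases x
  · exact good_ga t ht
  · exact good_gb t ht
  · exact good_gc t ht

lemma good_toM (w : FreeMonoid (Fin 3)) : Good (toM w) := by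
  induction w using FreeMonoid.recOn with
  | one => intro h; rfl
  | of_mul x w ihw =>
    rw [map_mul, toM_of]
    exact good_mul_gen x _ ihw

theorem nf_s16 (w : FreeMonoid (Fin 3)) : (conGen rel).mk' w = psi (toM w) := by
  induction w using FreeMonoid.recOn with
  | one => simp only [map_one]; rfl
  | of_mul x w ihw =>
    rw [map_mul, map_mul, toM_of, ihw]
    exact step_all x _ (good_toM w)

lemma nf_fix (x : GBii) : x = psi (phi x) := by
  obtain ⟨w, rfl⟩ := Con.mk'_surjective (c := conGen rel) x
  rw [phi_mk]
  exact nf_s16 w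

lemma good_phi (x : GBii) : Good (phi x) := by
  obtain ⟨w, rfl⟩ := Con.mk'_surjective (c := conGen rel) x
  rw [phi_mk]
  exact good_toM w

lemma phi_inj {x y : GBii} (h : phi x = phi y) : x = y := by
  rw [nf_fix x, nf_fix y, h]

/-! ### powers in Mo -/
lemma gc_pow (k : ℕ) : gc ^ k = ⟨0, fun r => if r = 0 then k else 0⟩ := by
  induction k with
  | zero => refine Mo.ext rfl ?_; funext r; simp [Mo.one_def]
  | succ k ih =>
    rw [pow_succ, ih, Mo.mul_def]
    refine Mo.ext rfl ?_
    funext r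
    rcases z3cases r with rfl | rfl | rfl <;>
      simp [gc, zne10, zne20]
lemma ga_pow (k : ℕ) : ga ^ k = ⟨0, fun r => if r = 1 then k else 0⟩ := by
  induction k with
  | zero => refine Mo.ext rfl ?_; funext r; simp [Mo.one_def]
  | succ k ih =>
    rw [pow_succ, ih, Mo.mul_def]
    refine Mo.ext rfl ?_
    funext r
    rcases z3cases r with rfl | rfl | rfl <;>
      simp [ga, zne01, zne21]
lemma gb_pow (m : ℕ) : gb ^ m = ⟨m, fun _ => 0⟩ := by
  induction m with
  | zero => refine Mo.ext rfl ?_; funext r; simp [Mo.one_def]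
  | succ m ih =>
    rw [pow_succ, ih, Mo.mul_def]
    exact Mo.ext (by simp [gb]) (by funext r; simp [gb])

lemma phi_psi (t : Mo) (ht : Good t) : phi (psi t) = t := by
  rcases t with ⟨n, f⟩
  rcases n with _ | _ | m
  · have h2 : f 2 = 0 := ht rfl
    simp only [psi, psiv, map_mul, map_pow, phi_a, phi_b, phi_c,
      ga_pow, gb_pow, gc_pow, Mo.mul_def]
    refine Mo.ext (by simp) ?_
    funext r
    rcases z3cases r with rfl | rfl | rfl <;>
      simp [h2, ga, gb, gc, zs01, zs11, zs21, zs02, zs12, zs22, zneg1, zneg2,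
        zne10, zne20, zne01, zne21, zne02, zne12]
  · simp only [psi, psiv, map_mul, map_pow, phi_a, phi_b, phi_c,
      ga_pow, gb_pow, gc_pow, Mo.mul_def]
    refine Mo.ext (by simp [ga, gb, gc]) ?_
    funext r
    rcases z3cases r with rfl | rfl | rfl <;>
      simp [ga, gb, gc, zs01, zs11, zs21, zs02, zs12, zs22, zneg1, zneg2,
        zne10, zne20, zne01, zne21, zne02, zne12]
  · simp only [psi, psiv, map_mul, map_pow, phi_a, phi_b, phi_c,
      ga_pow, gb_pow, gc_pow, Mo.mul_def]
    refine Mo.ext (by simp [ga, gb, gc]; omega) ?_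
    funext r
    rcases z3cases r with rfl | rfl | rfl <;>
      simp [ga, gb, gc, zs01, zs11, zs21, zs02, zs12, zs22, zneg1, zneg2,
        zne10, zne20, zne01, zne21, zne02, zne12]

lemma comp3 (i : ℕ) (t : Mo) :
    gc ^ i * gb * t = ⟨t.n + 1, fun r => (if r = 0 then i else 0) + t.f (r - 1)⟩ := by
  rw [gc_pow, Mo.mul_def, Mo.mul_def]
  refine Mo.ext (by simp [gb, add_comm]) ?_
  funext r
  simp [gb]


/-- Lemma 5.2: if `bb·X = c·Y` in `G⁺_{B_ii}`, then `X = a·Z` and `Y = bb·Z`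
for some `Z`. -/
theorem stmt_16 (i j : ℕ) (hij : i < j) (X Y : GBii)
    (h : c ^ i * b * X = c ^ j * b * Y) :
    ∃ (k : ℕ) (Z : GBii), X = c ^ k * b * a ^ (j - i) * Z ∧ Y = c ^ k * b * Z := by
  have hphi := congrArg phi h
  rw [map_mul, map_mul, map_mul, map_mul, map_pow, map_pow, phi_b, phi_c,
    comp3, comp3] at hphi
  have hn : (phi X).n = (phi Y).n := by
    have := congrArg Mo.n hphi
    simpa using this
  have hf := congrArg Mo.f hphi
  have hf0 : i + (phi X).f 2 = j + (phi Y).f 2 := by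
    have := congrFun hf 0
    simpa [zs01, zneg1] using this
  have hf1 : (phi X).f 0 = (phi Y).f 0 := by
    have := congrFun hf 1
    simpa [zs11, zne10] using this
  have hf2 : (phi X).f 1 = (phi Y).f 1 := by
    have := congrFun hf 2
    simpa [zs21, zne20] using this
  have hn1 : 1 ≤ (phi X).n := by
    by_contra hcon
    have hx0 : (phi X).n = 0 := by omega
    have h2x : (phi X).f 2 = 0 := good_phi X hx0
    have h2y : (phi Y).f 2 = 0 := good_phi Y (by omega)
    omega
  set g : ZMod 3 → ℕ :=
    fun r => if r = 0 then (phi X).f 1 else if r = 1 then (phi Y).f 2 else 0 with hg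
  set t0 : Mo := ⟨(phi X).n - 1, g⟩ with ht0
  have hgood : Good t0 := by
    intro _
    show g 2 = 0
    rw [hg]
    simp [zne20, zne21]
  have hZ : phi (psi t0) = t0 := phi_psi t0 hgood
  have hgeval0 : g 0 = (phi X).f 1 := by rw [hg]; simp
  have hgeval1 : g 1 = (phi Y).f 2 := by rw [hg]; simp [zne10]
  have hgeval2 : g 2 = 0 := by rw [hg]; simp [zne20, zne21]
  refine ⟨(phi X).f 0, psi t0, ?_, ?_⟩
  · apply phi_inj
    rw [map_mul, map_mul, map_mul, map_pow, map_pow, phi_a, phi_b, phi_c, hZ]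
    refine Mo.ext ?_ ?_
    · rw [ga_pow, gc_pow, Mo.mul_def, Mo.mul_def, Mo.mul_def]
      show (phi X).n = 0 + gb.n + 0 + ((phi X).n - 1)
      rw [show gb.n = 1 from rfl]
      omega
    · funext r
      rw [ga_pow, gc_pow, Mo.mul_def, Mo.mul_def, Mo.mul_def]
      rcases z3cases r with rfl | rfl | rfl <;>
        simp [gb, ht0, hgeval0, hgeval1, hgeval2, zs01, zs11, zs21, zneg1, zneg2,
          zne10, zne20, zne01, zne21, zne02, zne12] <;>
        omega
  · apply phi_inj
    rw [map_mul, map_mul, map_pow, phi_b, phi_c, hZ, comp3]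
    refine Mo.ext ?_ ?_
    · show (phi Y).n = (phi X).n - 1 + 1
      omega
    · funext r
      rcases z3cases r with rfl | rfl | rfl <;>
        simp [ht0, hgeval0, hgeval1, hgeval2, zs01, zs11, zs21, zneg1, zneg2,
          zne10, zne20, zne01, zne21, zne02, zne12] <;>
        omega


end Bii
end
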